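/- arXiv:2108.12485 — 2 statements merged into one kernel-verified Lean document; each statement's English description precedes it below -/
import Mathlib

section
/- Let d := sup_{n≥0} ‖D_n‖ < ∞, let z ∈ ℂ, and let u, v : ℤ_+ → ℂ^l satisfy the eigenvalue equation D_{n−1}w_{n−1} + D_n w_{n+1} + V_n w_n = z w_n for all n ≥ 1. Suppose C := W_{[u,v]}(1) = u_1^t D_0 v_0 − v_1^t D_0 u_0 ≠ 0. Then: (a) for every n ≥ 1, ‖u_n‖‖v_{n−1}‖ + ‖v_n‖‖u_{n−1}‖ ≥ |C|/d; (b) if in addition there are c_0, α > 0 with ‖u_n‖ ≤ c_0 e^{−α n} for all n ≥ 0, then for every n ≥ 1, ‖v_{n−1}‖ + ‖v_n‖ ≥ (|C|/(d·c_0)) e^{α(n−1)}; in particular ‖v_n‖ grows exponentially along a subsequence. -/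
open Matrix

noncomputable section

/-- The complexification of a real matrix. -/
def cmat {l : ℕ} (A : Matrix (Fin l) (Fin l) ℝ) : Matrix (Fin l) (Fin l) ℂ :=
  A.map (Complex.ofReal)

/-- The operator norm of a real `l×l` matrix. -/
def opNorm {l : ℕ} (A : Matrix (Fin l) (Fin l) ℝ) : ℝ :=
  ‖Matrix.toEuclideanCLM (𝕜 := ℝ) (n := Fin l) A‖

/-- The Euclidean norm of a vector in `ℂ^l`. -/
def evnorm {l : ℕ} (w : Fin l → ℂ) : ℝ :=
  Real.sqrt (∑ i, ‖w i‖ ^ 2)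


lemma evnorm_nonneg {l : ℕ} (w : Fin l → ℂ) : 0 ≤ evnorm w := Real.sqrt_nonneg _

lemma opNorm_nonneg {l : ℕ} (A : Matrix (Fin l) (Fin l) ℝ) : 0 ≤ opNorm A := norm_nonneg _

lemma dot_abs_le {l : ℕ} (x y : Fin l → ℂ) : ‖x ⬝ᵥ y‖ ≤ evnorm x * evnorm y := by
  have hnn : 0 ≤ ∑ i, ‖x i‖ * ‖y i‖ :=
    Finset.sum_nonneg fun i _ => mul_nonneg (norm_nonneg _) (norm_nonneg _)
  calc ‖x ⬝ᵥ y‖ ≤ ∑ i, ‖x i * y i‖ := norm_sum_le _ _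
    _ = ∑ i, ‖x i‖ * ‖y i‖ := by simp [norm_mul]
    _ = Real.sqrt ((∑ i, ‖x i‖ * ‖y i‖) ^ 2) := (Real.sqrt_sq hnn).symm
    _ ≤ Real.sqrt ((∑ i, ‖x i‖ ^ 2) * ∑ i, ‖y i‖ ^ 2) :=
        Real.sqrt_le_sqrt (Finset.sum_mul_sq_le_sq_mul_sq Finset.univ _ _)
    _ = evnorm x * evnorm y := by
        rw [evnorm, evnorm, ← Real.sqrt_mul (by positivity)]

lemma mulVec_real_bound {l : ℕ} (A : Matrix (Fin l) (Fin l) ℝ) (x : Fin l → ℝ) :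
    Real.sqrt (∑ i, (A *ᵥ x) i ^ 2) ≤ opNorm A * Real.sqrt (∑ i, x i ^ 2) := by
  have key := (Matrix.toEuclideanCLM (𝕜 := ℝ) (n := Fin l) A).le_opNorm
    ((WithLp.equiv 2 (Fin l → ℝ)).symm x)
  have e : (Matrix.toEuclideanCLM (𝕜 := ℝ) (n := Fin l) A) ((WithLp.equiv 2 (Fin l → ℝ)).symm x)
      = (WithLp.equiv 2 (Fin l → ℝ)).symm (Matrix.toLin' A x) := rfl
  rw [e] at key
  have h1 : ‖(WithLp.equiv 2 (Fin l → ℝ)).symm (Matrix.toLin' A x)‖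
      = Real.sqrt (∑ i, (A *ᵥ x) i ^ 2) := by
    rw [EuclideanSpace.norm_eq]
    simp [Real.norm_eq_abs, sq_abs, Matrix.toLin'_apply]
  have h2 : ‖(WithLp.equiv 2 (Fin l → ℝ)).symm x‖ = Real.sqrt (∑ i, x i ^ 2) := by
    rw [EuclideanSpace.norm_eq]
    simp [Real.norm_eq_abs, sq_abs]
  rw [h1, h2] at key
  exact key

lemma mulVec_evnorm_bound {l : ℕ} (A : Matrix (Fin l) (Fin l) ℝ) (w : Fin l → ℂ) :
    evnorm (cmat A *ᵥ w) ≤ opNorm A * evnorm w := by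
  set a : Fin l → ℝ := fun i => (w i).re with ha
  set b : Fin l → ℝ := fun i => (w i).im with hb
  have hre : ∀ i, ((cmat A *ᵥ w) i).re = (A *ᵥ a) i := by
    intro i
    simp [cmat, Matrix.mulVec, dotProduct, Complex.re_sum, ha]
  have him : ∀ i, ((cmat A *ᵥ w) i).im = (A *ᵥ b) i := by
    intro i
    simp [cmat, Matrix.mulVec, dotProduct, Complex.im_sum, hb]
  have hsq : ∀ (zv : Fin l → ℂ), ∑ i, ‖zv i‖ ^ 2 = ∑ i, ((zv i).re ^ 2 + (zv i).im ^ 2) := by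
    intro zv
    refine Finset.sum_congr rfl fun i _ => ?_
    rw [Complex.sq_norm, Complex.normSq_apply]; ring
  have hSa : Real.sqrt (∑ i, (A *ᵥ a) i ^ 2) ≤ opNorm A * Real.sqrt (∑ i, a i ^ 2) :=
    mulVec_real_bound A a
  have hSb : Real.sqrt (∑ i, (A *ᵥ b) i ^ 2) ≤ opNorm A * Real.sqrt (∑ i, b i ^ 2) :=
    mulVec_real_bound A b
  have hSa' : ∑ i, (A *ᵥ a) i ^ 2 ≤ opNorm A ^ 2 * ∑ i, a i ^ 2 := by
    have h := pow_le_pow_left₀ (Real.sqrt_nonneg _) hSa 2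
    rw [Real.sq_sqrt (by positivity), mul_pow, Real.sq_sqrt (by positivity)] at h
    exact h
  have hSb' : ∑ i, (A *ᵥ b) i ^ 2 ≤ opNorm A ^ 2 * ∑ i, b i ^ 2 := by
    have h := pow_le_pow_left₀ (Real.sqrt_nonneg _) hSb 2
    rw [Real.sq_sqrt (by positivity), mul_pow, Real.sq_sqrt (by positivity)] at h
    exact h
  have key : ∑ i, ‖(cmat A *ᵥ w) i‖ ^ 2 ≤ opNorm A ^ 2 * ∑ i, ‖w i‖ ^ 2 := by
    rw [hsq (cmat A *ᵥ w), hsq w]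
    simp only [hre, him]
    rw [Finset.sum_add_distrib, Finset.sum_add_distrib, mul_add]
    exact add_le_add hSa' hSb'
  calc evnorm (cmat A *ᵥ w) ≤ Real.sqrt (opNorm A ^ 2 * ∑ i, ‖w i‖ ^ 2) :=
        Real.sqrt_le_sqrt key
    _ = opNorm A * evnorm w := by
        rw [Real.sqrt_mul (by positivity), Real.sqrt_sq (opNorm_nonneg A)]; rfl

lemma symm_dot {l : ℕ} (A : Matrix (Fin l) (Fin l) ℝ) (hA : A.IsSymm) (x y : Fin l → ℂ) :
    x ⬝ᵥ (cmat A *ᵥ y) = (cmat A *ᵥ x) ⬝ᵥ y := by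
  have hA' : (cmat A)ᵀ = cmat A := by
    rw [cmat, ← Matrix.transpose_map, hA]
  rw [Matrix.dotProduct_mulVec, ← Matrix.mulVec_transpose, hA']

/-- Lower bounds coming from a nonzero Wronskian: part (a) gives
`‖u_n‖‖v_{n-1}‖ + ‖v_n‖‖u_{n-1}‖ ≥ |C|/d`, and part (b) shows that if `u` decays
exponentially then `‖v_{n-1}‖ + ‖v_n‖ ≥ (|C|/(d c₀)) e^{α(n-1)}`. -/
theorem wronskian_lower_bounds (l : ℕ) (hl : 1 ≤ l)
    (D V : ℕ → Matrix (Fin l) (Fin l) ℝ)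
    (hDsymm : ∀ n, (D n).IsSymm) (hVsymm : ∀ n, (V n).IsSymm)
    (hDinv : ∀ n, IsUnit (D n).det)
    (d : ℝ) (hd : 0 < d) (hDbdd : ∀ n, opNorm (D n) ≤ d)
    (z : ℂ) (u v : ℕ → Fin l → ℂ)
    (hu : ∀ n : ℕ, 1 ≤ n → cmat (D (n - 1)) *ᵥ u (n - 1) + cmat (D n) *ᵥ u (n + 1)
        + cmat (V n) *ᵥ u n = z • u n)
    (hv : ∀ n : ℕ, 1 ≤ n → cmat (D (n - 1)) *ᵥ v (n - 1) + cmat (D n) *ᵥ v (n + 1)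
        + cmat (V n) *ᵥ v n = z • v n)
    (C : ℂ)
    (hC : C = u 1 ⬝ᵥ (cmat (D 0) *ᵥ v 0) - v 1 ⬝ᵥ (cmat (D 0) *ᵥ u 0))
    (hC0 : C ≠ 0) :
    (∀ n : ℕ, 1 ≤ n →
        evnorm (u n) * evnorm (v (n - 1)) + evnorm (v n) * evnorm (u (n - 1))
          ≥ ‖C‖ / d) ∧
      (∀ c₀ α : ℝ, 0 < c₀ → 0 < α →
        (∀ n : ℕ, evnorm (u n) ≤ c₀ * Real.exp (-α * n)) →
        ∀ n : ℕ, 1 ≤ n →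
          evnorm (v (n - 1)) + evnorm (v n)
            ≥ (‖C‖ / (d * c₀)) * Real.exp (α * ((n : ℝ) - 1))) := by
  set Wr : ℕ → ℂ := fun m =>
    u m ⬝ᵥ (cmat (D (m - 1)) *ᵥ v (m - 1)) - v m ⬝ᵥ (cmat (D (m - 1)) *ᵥ u (m - 1)) with hWr
  -- Wronskian is constant
  have step : ∀ n : ℕ, 1 ≤ n → Wr (n + 1) = Wr n := by
    intro n hn
    have heu : cmat (D n) *ᵥ u (n + 1)
        = z • u n - cmat (V n) *ᵥ u n - cmat (D (n - 1)) *ᵥ u (n - 1) := by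
      funext i
      have h2 := congrFun (hu n hn) i
      simp only [Pi.add_apply, Pi.smul_apply, smul_eq_mul] at h2
      simp only [Pi.sub_apply, Pi.smul_apply, smul_eq_mul]
      linear_combination h2
    have hev : cmat (D n) *ᵥ v (n + 1)
        = z • v n - cmat (V n) *ᵥ v n - cmat (D (n - 1)) *ᵥ v (n - 1) := by
      funext i
      have h2 := congrFun (hv n hn) i
      simp only [Pi.add_apply, Pi.smul_apply, smul_eq_mul] at h2
      simp only [Pi.sub_apply, Pi.smul_apply, smul_eq_mul]
      linear_combination h2
    have e1 : u (n + 1) ⬝ᵥ (cmat (D n) *ᵥ v n)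
        = (z • u n - cmat (V n) *ᵥ u n - cmat (D (n - 1)) *ᵥ u (n - 1)) ⬝ᵥ v n := by
      rw [symm_dot _ (hDsymm n), heu]
    have e2 : v (n + 1) ⬝ᵥ (cmat (D n) *ᵥ u n)
        = (z • v n - cmat (V n) *ᵥ v n - cmat (D (n - 1)) *ᵥ v (n - 1)) ⬝ᵥ u n := by
      rw [symm_dot _ (hDsymm n), hev]
    show u (n + 1) ⬝ᵥ (cmat (D n) *ᵥ v n) - v (n + 1) ⬝ᵥ (cmat (D n) *ᵥ u n)
        = u n ⬝ᵥ (cmat (D (n - 1)) *ᵥ v (n - 1)) - v n ⬝ᵥ (cmat (D (n - 1)) *ᵥ u (n - 1))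
    rw [e1, e2]
    simp only [sub_dotProduct, smul_dotProduct, smul_eq_mul]
    rw [dotProduct_comm (v n) (u n),
      dotProduct_comm (cmat (V n) *ᵥ v n) (u n),
      symm_dot _ (hVsymm n) (u n) (v n),
      dotProduct_comm (cmat (D (n - 1)) *ᵥ v (n - 1)) (u n),
      dotProduct_comm (cmat (D (n - 1)) *ᵥ u (n - 1)) (v n)]
    ring
  have wconst : ∀ n : ℕ, 1 ≤ n → Wr n = C := by
    intro n hn
    induction n, hn using Nat.le_induction with
    | base => rw [hC]
    | succ n hn ih => rw [step n hn, ih]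
  -- part (a)
  have parta : ∀ n : ℕ, 1 ≤ n →
      evnorm (u n) * evnorm (v (n - 1)) + evnorm (v n) * evnorm (u (n - 1))
        ≥ ‖C‖ / d := by
    intro n hn
    have habs : ‖C‖ = ‖Wr n‖ := by rw [wconst n hn]
    have h1 : ‖Wr n‖ ≤ evnorm (u n) * evnorm (cmat (D (n - 1)) *ᵥ v (n - 1))
        + evnorm (v n) * evnorm (cmat (D (n - 1)) *ᵥ u (n - 1)) :=
      le_trans (norm_sub_le _ _) (add_le_add (dot_abs_le _ _) (dot_abs_le _ _))
    have hb1 : evnorm (cmat (D (n - 1)) *ᵥ v (n - 1)) ≤ d * evnorm (v (n - 1)) :=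
      le_trans (mulVec_evnorm_bound _ _)
        (mul_le_mul_of_nonneg_right (hDbdd _) (evnorm_nonneg _))
    have hb2 : evnorm (cmat (D (n - 1)) *ᵥ u (n - 1)) ≤ d * evnorm (u (n - 1)) :=
      le_trans (mulVec_evnorm_bound _ _)
        (mul_le_mul_of_nonneg_right (hDbdd _) (evnorm_nonneg _))
    have h2 : ‖C‖ ≤ d * (evnorm (u n) * evnorm (v (n - 1))
        + evnorm (v n) * evnorm (u (n - 1))) := by
      rw [habs]
      calc ‖Wr n‖ ≤ _ := h1
        _ ≤ evnorm (u n) * (d * evnorm (v (n - 1)))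
            + evnorm (v n) * (d * evnorm (u (n - 1))) :=
          add_le_add (mul_le_mul_of_nonneg_left hb1 (evnorm_nonneg _))
            (mul_le_mul_of_nonneg_left hb2 (evnorm_nonneg _))
        _ = d * (evnorm (u n) * evnorm (v (n - 1)) + evnorm (v n) * evnorm (u (n - 1))) := by
          ring
    rw [ge_iff_le, div_le_iff₀ hd]
    linarith
  refine ⟨parta, ?_⟩
  intro c₀ α hc₀ hα hdecay n hn
  have ha := parta n hn
  set E := Real.exp (α * ((n : ℝ) - 1)) with hE
  have hEpos : 0 < E := Real.exp_pos _
  have hu1 : evnorm (u n) ≤ c₀ * E⁻¹ := by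
    calc evnorm (u n) ≤ c₀ * Real.exp (-α * n) := hdecay n
      _ ≤ c₀ * E⁻¹ := by
        rw [hE, ← Real.exp_neg]
        have : -α * (n : ℝ) ≤ -(α * ((n : ℝ) - 1)) := by nlinarith
        exact mul_le_mul_of_nonneg_left (Real.exp_le_exp.mpr this) hc₀.le
  have hu2 : evnorm (u (n - 1)) ≤ c₀ * E⁻¹ := by
    calc evnorm (u (n - 1)) ≤ c₀ * Real.exp (-α * ((n : ℕ) - 1 : ℕ)) := hdecay (n - 1)
      _ = c₀ * E⁻¹ := by
        rw [hE, ← Real.exp_neg, Nat.cast_sub hn, Nat.cast_one]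
        ring_nf
  have key : ‖C‖ / d ≤ c₀ * E⁻¹ * (evnorm (v (n - 1)) + evnorm (v n)) := by
    have t1 : evnorm (u n) * evnorm (v (n - 1)) ≤ c₀ * E⁻¹ * evnorm (v (n - 1)) :=
      mul_le_mul_of_nonneg_right hu1 (evnorm_nonneg _)
    have t2 : evnorm (v n) * evnorm (u (n - 1)) ≤ c₀ * E⁻¹ * evnorm (v n) := by
      rw [mul_comm (evnorm (v n))]
      exact mul_le_mul_of_nonneg_right hu2 (evnorm_nonneg _)
    calc ‖C‖ / d ≤ _ := ha
      _ ≤ c₀ * E⁻¹ * evnorm (v (n - 1)) + c₀ * E⁻¹ * evnorm (v n) := add_le_add t1 t2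
      _ = c₀ * E⁻¹ * (evnorm (v (n - 1)) + evnorm (v n)) := by ring
  rw [ge_iff_le, div_mul_eq_mul_div, div_le_iff₀ (by positivity)]
  have hEinv : E * E⁻¹ = 1 := mul_inv_cancel₀ hEpos.ne'
  have hC' : ‖C‖ ≤ d * (c₀ * E⁻¹ * (evnorm (v (n - 1)) + evnorm (v n))) := by
    rw [div_le_iff₀ hd] at key; linarith
  calc ‖C‖ * E ≤ d * (c₀ * E⁻¹ * (evnorm (v (n - 1)) + evnorm (v n))) * E :=
        mul_le_mul_of_nonneg_right hC' hEpos.le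
    _ = (evnorm (v (n - 1)) + evnorm (v n)) * (d * c₀) * (E * E⁻¹) := by ring
    _ = (evnorm (v (n - 1)) + evnorm (v n)) * (d * c₀) := by rw [hEinv, mul_one]
end
end

section
/- Suppose sup_{n≥0} ‖D_n‖ < ∞ and let x ∈ ℝ. Let φ and ψ be the Dirichlet and Neumann matrix solutions of the eigenvalue equation at x. Then: (a) the product of truncated norms diverges, lim_{L→∞} ‖φ‖_L ‖ψ‖_L = ∞; (b) consequently, for every y > 0 there exists a real L ≥ 1 such that 2y ‖D_0^{-1}‖_F ‖ψ‖_L ‖φ‖_L = 1. -/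
open Matrix Filter

noncomputable section

/-- The Frobenius norm of a complex `l×l` matrix: `‖A‖_F = sqrt(tr(A*A))`. -/
def frob {l : ℕ} (A : Matrix (Fin l) (Fin l) ℂ) : ℝ :=
  Real.sqrt ((Aᴴ * A).trace.re)

/-- The truncated norm at `L ≥ 1` of a sequence `(B_n)_{n≥1}` of `l×l` complex matrices. -/
def truncNorm {l : ℕ} (L : ℝ) (B : ℕ → Matrix (Fin l) (Fin l) ℂ) : ℝ :=
  Real.sqrt ((∑ n ∈ Finset.Icc 1 ⌊L⌋₊, frob (B n) ^ 2)
    + (L - ⌊L⌋₊) * frob (B (⌊L⌋₊ + 1)) ^ 2)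

/-- `U` is a matrix solution of the eigenvalue equation at `w`. -/
def IsMatSol {l : ℕ} (D V : ℕ → Matrix (Fin l) (Fin l) ℝ) (w : ℂ)
    (U : ℕ → Matrix (Fin l) (Fin l) ℂ) : Prop :=
  ∀ n : ℕ, 1 ≤ n →
    cmat (D n) * U (n + 1) + cmat (D (n - 1)) * U (n - 1) + cmat (V n) * U n = w • U n

section aux
attribute [local instance] Matrix.frobeniusNormedAddCommGroup
variable {l : ℕ}

lemma trace_re_eq (A : Matrix (Fin l) (Fin l) ℂ) :
    ((Aᴴ * A).trace).re = ∑ i, ∑ j, ‖A i j‖ ^ 2 := by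
  have h : (Aᴴ * A).trace = ∑ j, ∑ i, (starRingEnd ℂ) (A i j) * A i j := by
    simp [Matrix.trace, Matrix.mul_apply, Matrix.diag, Matrix.conjTranspose_apply]
  rw [h, Complex.re_sum, Finset.sum_comm]
  congr 1; ext i
  rw [Complex.re_sum]
  congr 1; ext j
  rw [RCLike.conj_mul]; norm_cast

lemma frob_eq_norm (A : Matrix (Fin l) (Fin l) ℂ) : frob A = ‖A‖ := by
  rw [frob, trace_re_eq, Matrix.frobenius_norm_def, ← Real.sqrt_eq_rpow]
  congr 1
  congr 1; ext i; congr 1; ext j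
  rw [← Real.rpow_natCast ‖A i j‖ 2]; norm_num

lemma frob_nonneg (A : Matrix (Fin l) (Fin l) ℂ) : 0 ≤ frob A := Real.sqrt_nonneg _

lemma frob_mul_le (A B : Matrix (Fin l) (Fin l) ℂ) : frob (A * B) ≤ frob A * frob B := by
  simp only [frob_eq_norm]; exact Matrix.frobenius_norm_mul A B

lemma frob_transpose (A : Matrix (Fin l) (Fin l) ℂ) : frob Aᵀ = frob A := by
  simp only [frob_eq_norm]; exact Matrix.frobenius_norm_transpose A

lemma frob_sub_le (A B : Matrix (Fin l) (Fin l) ℂ) : frob (A - B) ≤ frob A + frob B := by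
  simp only [frob_eq_norm]; exact norm_sub_le A B

lemma frob_pos {A : Matrix (Fin l) (Fin l) ℂ} (h : A ≠ 0) : 0 < frob A := by
  rw [frob_eq_norm]; exact norm_pos_iff.2 h

lemma frob_zero : frob (0 : Matrix (Fin l) (Fin l) ℂ) = 0 := by
  rw [frob_eq_norm]; exact norm_zero

lemma entry_le_opNorm (A : Matrix (Fin l) (Fin l) ℝ) (i j : Fin l) : |A i j| ≤ opNorm A := by
  classical
  have h1 : Matrix.toEuclideanCLM (𝕜 := ℝ) (n := Fin l) A (EuclideanSpace.single j 1)
      = (WithLp.equiv 2 _).symm (A.mulVec (Pi.single j 1)) := by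
    exact Matrix.toEuclideanCLM_toLp A _
  have h2 : ‖Matrix.toEuclideanCLM (𝕜 := ℝ) (n := Fin l) A (EuclideanSpace.single j 1)‖
      ≤ opNorm A := by
    calc ‖_‖ ≤ opNorm A * ‖EuclideanSpace.single j (1:ℝ)‖ :=
          (Matrix.toEuclideanCLM (𝕜 := ℝ) (n := Fin l) A).le_opNorm _
    _ = opNorm A := by rw [EuclideanSpace.norm_single]; simp
  set w : EuclideanSpace ℝ (Fin l) := (WithLp.equiv 2 _).symm (A.mulVec (Pi.single j 1)) with hw
  have h3 : |A i j| ≤ ‖w‖ := by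
    have hwi : w i = A i j := by
      simp [hw, Matrix.mulVec_single]
    rw [EuclideanSpace.norm_eq]
    calc |A i j| = Real.sqrt (‖w i‖^2) := by rw [Real.sqrt_sq_eq_abs]; simp [hwi]
    _ ≤ _ := by
        apply Real.sqrt_le_sqrt
        exact Finset.single_le_sum (f := fun k => ‖w k‖^2) (fun k _ => sq_nonneg _)
          (Finset.mem_univ i)
  exact h3.trans (hw ▸ (h1 ▸ h2))

lemma frob_cmat_le {C : ℝ} (A : Matrix (Fin l) (Fin l) ℝ) (h : ∀ i j, |A i j| ≤ C)
    (hC : 0 ≤ C) : frob (cmat A) ≤ l * C := by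
  rw [frob, trace_re_eq]
  have hb : ∑ i, ∑ j, ‖(cmat A) i j‖ ^ 2 ≤ (l:ℝ) * ((l:ℝ) * C^2) := by
    calc (∑ i, ∑ j, ‖(cmat A) i j‖ ^ 2) ≤ ∑ _i : Fin l, ∑ _j : Fin l, C^2 := by
          apply Finset.sum_le_sum; intro i _
          apply Finset.sum_le_sum; intro j _
          have : ‖(cmat A) i j‖ = |A i j| := by simp [cmat]
          rw [this]
          exact pow_le_pow_left₀ (abs_nonneg _) (h i j) 2
    _ = (l:ℝ) * ((l:ℝ) * C^2) := by simp [Finset.sum_const, mul_assoc]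
  calc Real.sqrt _ ≤ Real.sqrt ((l*C)^2) := by apply Real.sqrt_le_sqrt; nlinarith
  _ = l * C := Real.sqrt_sq (by positivity)

end aux

lemma cmat_transpose {l : ℕ} (A : Matrix (Fin l) (Fin l) ℝ) : (cmat A)ᵀ = cmat Aᵀ :=
  (Matrix.transpose_map).symm

lemma wronskian {l : ℕ} (D V : ℕ → Matrix (Fin l) (Fin l) ℝ)
    (hDsymm : ∀ n, (D n).IsSymm) (hVsymm : ∀ n, (V n).IsSymm)
    (x : ℝ) (φ ψ : ℕ → Matrix (Fin l) (Fin l) ℂ)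
    (hφ : IsMatSol D V (x : ℂ) φ) (hφ0 : φ 0 = 0) (hφ1 : φ 1 = 1)
    (hψ : IsMatSol D V (x : ℂ) ψ) (hψ0 : ψ 0 = 1) (hψ1 : ψ 1 = 0) :
    ∀ n : ℕ, (ψ n)ᵀ * cmat (D n) * φ (n+1) - (ψ (n+1))ᵀ * cmat (D n) * φ n = cmat (D 0) := by
  intro n
  induction n with
  | zero => simp [hφ0, hφ1, hψ0, hψ1, Matrix.transpose_one]
  | succ n IH =>
    have hDs : (cmat (D (n+1)))ᵀ = cmat (D (n+1)) := by
      rw [cmat_transpose, (hDsymm (n+1)).eq]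
    have hVs : (cmat (V (n+1)))ᵀ = cmat (V (n+1)) := by
      rw [cmat_transpose, (hVsymm (n+1)).eq]
    have e1 := hφ (n+1) (by omega)
    have e2 := hψ (n+1) (by omega)
    simp only [Nat.add_sub_cancel] at e1 e2
    have k1 : cmat (D (n+1)) * φ (n+2) =
        (x:ℂ) • φ (n+1) - cmat (D n) * φ n - cmat (V (n+1)) * φ (n+1) := by
      rw [eq_sub_iff_add_eq, eq_sub_iff_add_eq, ← e1]; abel
    have k2 : (ψ (n+2))ᵀ * cmat (D (n+1)) =
        (x:ℂ) • (ψ (n+1))ᵀ - (ψ n)ᵀ * cmat (D n) - (ψ (n+1))ᵀ * cmat (V (n+1)) := by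
      have := congrArg Matrix.transpose e2
      simp only [Matrix.transpose_add, Matrix.transpose_mul, Matrix.transpose_smul,
        hDs, hVs] at this
      rw [cmat_transpose, (hDsymm n).eq] at this
      rw [eq_sub_iff_add_eq, eq_sub_iff_add_eq, ← this]; abel
    rw [← IH]
    rw [mul_assoc ((ψ (n+1))ᵀ), k1, k2]
    simp only [Matrix.mul_sub, Matrix.sub_mul, Matrix.mul_smul, Matrix.smul_mul, mul_assoc]
    abel

def gfun (f : ℕ → ℝ) (L : ℝ) : ℝ :=
  (∑ n ∈ Finset.Icc 1 ⌊L⌋₊, f n) + (L - ⌊L⌋₊) * f (⌊L⌋₊ + 1)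

lemma gfun_rep (f : ℕ → ℝ) (N : ℕ) {L : ℝ} (h0 : 0 ≤ L) (hN : L ≤ N) :
    gfun f L = ∑ n ∈ Finset.Icc 1 N, f n * (min L n - min L ((n - 1 : ℕ) : ℝ)) := by
  set m := ⌊L⌋₊ with hm
  have hmL : (m:ℝ) ≤ L := Nat.floor_le h0
  have hLm : L < m + 1 := Nat.lt_floor_add_one L
  have hmN : m ≤ N := by
    have : (m:ℝ) ≤ (N:ℝ) := hmL.trans hN
    exact_mod_cast this
  have hsplit : Finset.Icc 1 N = Finset.Ioc 0 m ∪ Finset.Ioc m N := by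
    rw [Finset.Ioc_union_Ioc_eq_Ioc (Nat.zero_le m) hmN]
    exact (Finset.Icc_add_one_left_eq_Ioc 0 N)
  have hdisj : Disjoint (Finset.Ioc 0 m) (Finset.Ioc m N) := by
    apply Finset.disjoint_left.2
    intro a ha hb
    simp only [Finset.mem_Ioc] at ha hb; omega
  rw [hsplit, Finset.sum_union hdisj]
  have h1 : ∑ n ∈ Finset.Ioc 0 m, f n * (min L n - min L ((n - 1 : ℕ) : ℝ))
      = ∑ n ∈ Finset.Icc 1 m, f n := by
    rw [← Finset.Icc_add_one_left_eq_Ioc 0 m]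
    apply Finset.sum_congr rfl
    intro n hn
    simp only [Finset.mem_Icc] at hn
    have hn1 : 1 ≤ n := hn.1
    have hnL : (n:ℝ) ≤ L := le_trans (by exact_mod_cast hn.2) hmL
    have hn1L : ((n-1:ℕ):ℝ) ≤ L := le_trans (by exact_mod_cast Nat.sub_le n 1) hnL
    rw [min_eq_right hnL, min_eq_right hn1L]
    have : ((n-1:ℕ):ℝ) = (n:ℝ) - 1 := by
      push_cast [hn1]; ring
    rw [this]; ring
  have h2 : ∑ n ∈ Finset.Ioc m N, f n * (min L n - min L ((n - 1 : ℕ) : ℝ))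
      = (L - m) * f (m + 1) := by
    rcases eq_or_lt_of_le hmN with hEq | hlt
    · subst hEq
      have : L = (m:ℝ) := le_antisymm hN hmL
      simp [this]
    · rw [Finset.sum_eq_single_of_mem (m+1) (by simp [Finset.mem_Ioc]; omega)]
      · have hL1 : L ≤ ((m+1:ℕ):ℝ) := by push_cast; linarith
        have : ((m+1-1:ℕ):ℝ) = (m:ℝ) := by norm_num
        rw [this, min_eq_left (by push_cast; linarith), min_eq_right hmL]
        ring
      · intro b hb hne
        simp only [Finset.mem_Ioc] at hb
        have hb2 : m + 2 ≤ b := by omega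
        have hLb : L ≤ ((b-1:ℕ):ℝ) := by
          have : (m:ℝ) + 1 ≤ ((b-1:ℕ):ℝ) := by
            have : m + 1 ≤ b - 1 := by omega
            exact_mod_cast this
          linarith
        have hLb' : L ≤ (b:ℝ) := hLb.trans (by exact_mod_cast Nat.sub_le b 1)
        rw [min_eq_left hLb', min_eq_left hLb]
        ring
  rw [h1, h2, gfun]

lemma gfun_contOn (f : ℕ → ℝ) (N : ℕ) : ContinuousOn (gfun f) (Set.Icc 0 (N:ℝ)) := by
  have hc : ContinuousOn
      (fun L : ℝ => ∑ n ∈ Finset.Icc 1 N, f n * (min L n - min L ((n - 1 : ℕ) : ℝ)))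
      (Set.Icc 0 (N:ℝ)) := by
    apply Continuous.continuousOn
    apply continuous_finset_sum
    intro n _
    exact continuous_const.mul ((continuous_id.min continuous_const).sub
      (continuous_id.min continuous_const))
  exact hc.congr (fun L hL => gfun_rep f N hL.1 hL.2)

lemma gfun_mono (f : ℕ → ℝ) (hf : ∀ n, 0 ≤ f n) {L1 L2 : ℝ} (h0 : 0 ≤ L1) (h12 : L1 ≤ L2) :
    gfun f L1 ≤ gfun f L2 := by
  have h02 : 0 ≤ L2 := h0.trans h12
  have hm : ⌊L1⌋₊ ≤ ⌊L2⌋₊ := Nat.floor_le_floor h12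
  rcases eq_or_lt_of_le hm with hEq | hlt
  · rw [gfun, gfun, ← hEq]
    refine add_le_add le_rfl ?_
    exact mul_le_mul_of_nonneg_right (by linarith) (hf _)
  · have step1 : gfun f L1 ≤ ∑ n ∈ Finset.Icc 1 (⌊L1⌋₊ + 1), f n := by
      rw [Finset.sum_Icc_succ_top (by omega), gfun]
      refine add_le_add le_rfl ?_
      have : L1 - ⌊L1⌋₊ ≤ 1 := by
        have := Nat.lt_floor_add_one L1; linarith
      nlinarith [hf (⌊L1⌋₊ + 1)]
    have step2 : ∑ n ∈ Finset.Icc 1 (⌊L1⌋₊ + 1), f n ≤ ∑ n ∈ Finset.Icc 1 ⌊L2⌋₊, f n := by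
      apply Finset.sum_le_sum_of_subset_of_nonneg
      · exact Finset.Icc_subset_Icc_right (by omega)
      · intro n _ _; exact hf n
    have step3 : ∑ n ∈ Finset.Icc 1 ⌊L2⌋₊, f n ≤ gfun f L2 := by
      rw [gfun]
      have : (0:ℝ) ≤ (L2 - ⌊L2⌋₊) * f (⌊L2⌋₊ + 1) :=
        mul_nonneg (by have := Nat.floor_le h02; linarith) (hf _)
      linarith
    linarith

lemma truncNorm_eq_sqrt_gfun {l : ℕ} (L : ℝ) (B : ℕ → Matrix (Fin l) (Fin l) ℂ) :
    truncNorm L B = Real.sqrt (gfun (fun n => frob (B n) ^ 2) L) := rfl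

lemma truncNorm_nat {l : ℕ} (M : ℕ) (B : ℕ → Matrix (Fin l) (Fin l) ℂ) :
    truncNorm (M : ℝ) B = Real.sqrt (∑ n ∈ Finset.Icc 1 M, frob (B n) ^ 2) := by
  rw [truncNorm]
  norm_num

lemma sqrt_cs (s : Finset ℕ) (u v : ℕ → ℝ) (hu : ∀ n, 0 ≤ u n) (hv : ∀ n, 0 ≤ v n) :
    ∑ n ∈ s, u n * v n
      ≤ Real.sqrt (∑ n ∈ s, u n ^ 2) * Real.sqrt (∑ n ∈ s, v n ^ 2) := by
  have h := Finset.sum_mul_sq_le_sq_mul_sq s u v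
  have h0 : 0 ≤ ∑ n ∈ s, u n * v n :=
    Finset.sum_nonneg fun n _ => mul_nonneg (hu n) (hv n)
  calc ∑ n ∈ s, u n * v n = Real.sqrt ((∑ n ∈ s, u n * v n) ^ 2) := (Real.sqrt_sq h0).symm
  _ ≤ Real.sqrt ((∑ n ∈ s, u n ^ 2) * (∑ n ∈ s, v n ^ 2)) := Real.sqrt_le_sqrt h
  _ = _ := Real.sqrt_mul (Finset.sum_nonneg fun n _ => sq_nonneg _) _

/-- (a) The product `‖φ‖_L ‖ψ‖_L` of truncated norms of the Dirichlet and Neumann solutions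
diverges as `L → ∞`; (b) consequently, for every `y > 0` there is `L ≥ 1` with
`2 y ‖D_0^{-1}‖_F ‖ψ‖_L ‖φ‖_L = 1`. -/
theorem exists_L_of_y (l : ℕ) (hl : 1 ≤ l)
    (D V : ℕ → Matrix (Fin l) (Fin l) ℝ)
    (hDsymm : ∀ n, (D n).IsSymm) (hVsymm : ∀ n, (V n).IsSymm)
    (hDinv : ∀ n, IsUnit (D n).det)
    (hDbdd : ∃ C : ℝ, ∀ n, opNorm (D n) ≤ C)
    (x : ℝ) (φ ψ : ℕ → Matrix (Fin l) (Fin l) ℂ)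
    (hφ : IsMatSol D V (x : ℂ) φ) (hφ0 : φ 0 = 0) (hφ1 : φ 1 = 1)
    (hψ : IsMatSol D V (x : ℂ) ψ) (hψ0 : ψ 0 = 1) (hψ1 : ψ 1 = 0) :
    Tendsto (fun L : ℝ => truncNorm L φ * truncNorm L ψ) atTop atTop ∧
      ∀ y : ℝ, 0 < y → ∃ L : ℝ, 1 ≤ L ∧
        2 * y * frob ((cmat (D 0))⁻¹) * truncNorm L ψ * truncNorm L φ = 1 := by
  classical
  have hFl : Nonempty (Fin l) := ⟨⟨0, hl⟩⟩
  obtain ⟨C, hC⟩ := hDbdd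
  have hC0 : 0 ≤ C := le_trans (norm_nonneg _) (hC 0)
  set C' : ℝ := l * C + 1 with hC'def
  have hC'pos : 0 < C' := by positivity
  have hC' : ∀ n, frob (cmat (D n)) ≤ C' := by
    intro n
    have := frob_cmat_le (D n) (fun i j => (entry_le_opNorm (D n) i j).trans (hC n)) hC0
    linarith
  -- positivity of frob (cmat (D 0))
  have hdet0 : ((D 0).det : ℂ) ≠ 0 := by
    exact_mod_cast (hDinv 0).ne_zero
  have hdet_cmat : (cmat (D 0)).det = ((D 0).det : ℂ) := by
    have h := RingHom.map_det (Complex.ofRealHom) (D 0)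
    exact h.symm
  have hne0 : cmat (D 0) ≠ 0 := by
    intro h
    rw [h, Matrix.det_zero] at hdet_cmat
    exact hdet0 hdet_cmat.symm
  have hc0 : 0 < frob (cmat (D 0)) := frob_pos hne0
  set c0 : ℝ := frob (cmat (D 0)) with hc0def
  set δ : ℝ := c0 / C' with hδdef
  have hδpos : 0 < δ := div_pos hc0 hC'pos
  set a : ℕ → ℝ := fun n => frob (ψ n) with ha
  set b : ℕ → ℝ := fun n => frob (φ n) with hb
  have ha0 : ∀ n, 0 ≤ a n := fun n => frob_nonneg _
  have hb0 : ∀ n, 0 ≤ b n := fun n => frob_nonneg _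
  -- key pointwise bound
  have key : ∀ n : ℕ, δ ≤ a n * b (n+1) + a (n+1) * b n := by
    intro n
    have hW := wronskian D V hDsymm hVsymm x φ ψ hφ hφ0 hφ1 hψ hψ0 hψ1 n
    have h1 : c0 ≤ frob ((ψ n)ᵀ * cmat (D n) * φ (n+1))
        + frob ((ψ (n+1))ᵀ * cmat (D n) * φ n) := by
      rw [hc0def, ← hW]
      exact frob_sub_le _ _
    have hX : frob ((ψ n)ᵀ * cmat (D n) * φ (n+1)) ≤ C' * (a n * b (n+1)) := by
      calc frob ((ψ n)ᵀ * cmat (D n) * φ (n+1))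
          ≤ frob ((ψ n)ᵀ * cmat (D n)) * frob (φ (n+1)) := frob_mul_le _ _
      _ ≤ (frob ((ψ n)ᵀ) * frob (cmat (D n))) * frob (φ (n+1)) :=
          mul_le_mul_of_nonneg_right (frob_mul_le _ _) (frob_nonneg _)
      _ = (frob (ψ n) * frob (cmat (D n))) * frob (φ (n+1)) := by
          rw [frob_transpose]
      _ ≤ (frob (ψ n) * C') * frob (φ (n+1)) :=
          mul_le_mul_of_nonneg_right
            (mul_le_mul_of_nonneg_left (hC' n) (frob_nonneg _)) (frob_nonneg _)
      _ = C' * (a n * b (n+1)) := by rw [ha, hb]; ring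
    have hY : frob ((ψ (n+1))ᵀ * cmat (D n) * φ n) ≤ C' * (a (n+1) * b n) := by
      calc frob ((ψ (n+1))ᵀ * cmat (D n) * φ n)
          ≤ frob ((ψ (n+1))ᵀ * cmat (D n)) * frob (φ n) := frob_mul_le _ _
      _ ≤ (frob ((ψ (n+1))ᵀ) * frob (cmat (D n))) * frob (φ n) :=
          mul_le_mul_of_nonneg_right (frob_mul_le _ _) (frob_nonneg _)
      _ = (frob (ψ (n+1)) * frob (cmat (D n))) * frob (φ n) := by
          rw [frob_transpose]
      _ ≤ (frob (ψ (n+1)) * C') * frob (φ n) :=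
          mul_le_mul_of_nonneg_right
            (mul_le_mul_of_nonneg_left (hC' n) (frob_nonneg _)) (frob_nonneg _)
      _ = C' * (a (n+1) * b n) := by rw [ha, hb]; ring
    rw [hδdef, div_le_iff₀ hC'pos]
    nlinarith
  -- summed bound
  have sum_bound : ∀ N : ℕ, (N:ℝ) * δ ≤
      2 * (truncNorm ((N:ℝ)+1) φ * truncNorm ((N:ℝ)+1) ψ) := by
    intro N
    have hshift : ∀ (u : ℕ → ℝ), (∀ n, 0 ≤ u n) →
        ∑ n ∈ Finset.Icc 1 N, u (n+1) ^ 2 ≤ ∑ n ∈ Finset.Icc 1 (N+1), u n ^ 2 := by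
      intro u hu
      have heq : ∑ n ∈ Finset.Icc 1 N, u (n+1) ^ 2 = ∑ n ∈ Finset.Icc 2 (N+1), u n ^ 2 := by
        rw [← Finset.Ico_add_one_right_eq_Icc, ← Finset.Ico_add_one_right_eq_Icc,
          Finset.sum_Ico_eq_sum_range, Finset.sum_Ico_eq_sum_range]
        apply Finset.sum_congr (congrArg Finset.range (by omega))
        intro i _
        have h12 : 1 + i + 1 = 2 + i := by omega
        rw [h12]
      rw [heq]
      apply Finset.sum_le_sum_of_subset_of_nonneg
      · exact Finset.Icc_subset_Icc_left (by omega)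
      · intro n _ _; exact sq_nonneg _
    have hsum1 : ∑ n ∈ Finset.Icc 1 N, a n * b (n+1)
        ≤ truncNorm ((N:ℝ)+1) ψ * truncNorm ((N:ℝ)+1) φ := by
      calc ∑ n ∈ Finset.Icc 1 N, a n * b (n+1)
          ≤ Real.sqrt (∑ n ∈ Finset.Icc 1 N, a n ^ 2)
            * Real.sqrt (∑ n ∈ Finset.Icc 1 N, b (n+1) ^ 2) :=
            sqrt_cs _ _ _ ha0 (fun n => hb0 (n+1))
      _ ≤ Real.sqrt (∑ n ∈ Finset.Icc 1 (N+1), a n ^ 2)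
            * Real.sqrt (∑ n ∈ Finset.Icc 1 (N+1), b n ^ 2) := by
            apply mul_le_mul
            · apply Real.sqrt_le_sqrt
              apply Finset.sum_le_sum_of_subset_of_nonneg
              · exact Finset.Icc_subset_Icc_right (by omega)
              · intro n _ _; exact sq_nonneg _
            · exact Real.sqrt_le_sqrt (hshift b hb0)
            · exact Real.sqrt_nonneg _
            · exact Real.sqrt_nonneg _
      _ = truncNorm ((N:ℝ)+1) ψ * truncNorm ((N:ℝ)+1) φ := by
            rw [show ((N:ℝ)+1) = ((N+1 : ℕ) : ℝ) by push_cast; ring,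
              truncNorm_nat, truncNorm_nat]
    have hsum2 : ∑ n ∈ Finset.Icc 1 N, a (n+1) * b n
        ≤ truncNorm ((N:ℝ)+1) ψ * truncNorm ((N:ℝ)+1) φ := by
      calc ∑ n ∈ Finset.Icc 1 N, a (n+1) * b n
          ≤ Real.sqrt (∑ n ∈ Finset.Icc 1 N, a (n+1) ^ 2)
            * Real.sqrt (∑ n ∈ Finset.Icc 1 N, b n ^ 2) :=
            sqrt_cs _ _ _ (fun n => ha0 (n+1)) hb0
      _ ≤ Real.sqrt (∑ n ∈ Finset.Icc 1 (N+1), a n ^ 2)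
            * Real.sqrt (∑ n ∈ Finset.Icc 1 (N+1), b n ^ 2) := by
            apply mul_le_mul
            · exact Real.sqrt_le_sqrt (hshift a ha0)
            · apply Real.sqrt_le_sqrt
              apply Finset.sum_le_sum_of_subset_of_nonneg
              · exact Finset.Icc_subset_Icc_right (by omega)
              · intro n _ _; exact sq_nonneg _
            · exact Real.sqrt_nonneg _
            · exact Real.sqrt_nonneg _
      _ = truncNorm ((N:ℝ)+1) ψ * truncNorm ((N:ℝ)+1) φ := by
            rw [show ((N:ℝ)+1) = ((N+1 : ℕ) : ℝ) by push_cast; ring,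
              truncNorm_nat, truncNorm_nat]
    have hNδ : (N:ℝ) * δ ≤ ∑ n ∈ Finset.Icc 1 N, (a n * b (n+1) + a (n+1) * b n) := by
      calc (N:ℝ) * δ = ∑ _n ∈ Finset.Icc 1 N, δ := by
            rw [Finset.sum_const, Nat.card_Icc]
            simp [nsmul_eq_mul]
      _ ≤ _ := Finset.sum_le_sum (fun n _ => key n)
    rw [Finset.sum_add_distrib] at hNδ
    have := add_le_add hsum1 hsum2
    nlinarith [this, hNδ]
  -- monotonicity of truncNorm
  have tmono : ∀ (B : ℕ → Matrix (Fin l) (Fin l) ℂ) {L1 L2 : ℝ}, 0 ≤ L1 → L1 ≤ L2 →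
      truncNorm L1 B ≤ truncNorm L2 B := by
    intro B L1 L2 h0 h12
    rw [truncNorm_eq_sqrt_gfun, truncNorm_eq_sqrt_gfun]
    exact Real.sqrt_le_sqrt (gfun_mono _ (fun n => sq_nonneg _) h0 h12)
  have tnonneg : ∀ (B : ℕ → Matrix (Fin l) (Fin l) ℂ) (L : ℝ), 0 ≤ truncNorm L B :=
    fun B L => Real.sqrt_nonneg _
  -- part (a)
  have parta : Tendsto (fun L : ℝ => truncNorm L φ * truncNorm L ψ) atTop atTop := by
    apply tendsto_atTop_atTop.2
    intro bnd
    obtain ⟨N, hN⟩ := exists_nat_ge (2 * bnd / δ)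
    refine ⟨(N:ℝ) + 1, fun L hL => ?_⟩
    have h2b : 2 * bnd ≤ (N:ℝ) * δ := by
      rw [div_le_iff₀ hδpos] at hN; linarith
    have hL0 : (0:ℝ) ≤ (N:ℝ) + 1 := by positivity
    have hmono : truncNorm ((N:ℝ)+1) φ * truncNorm ((N:ℝ)+1) ψ
        ≤ truncNorm L φ * truncNorm L ψ :=
      mul_le_mul (tmono φ hL0 hL) (tmono ψ hL0 hL) (tnonneg ψ _)
        (tnonneg φ _)
    have := sum_bound N
    nlinarith
  refine ⟨parta, ?_⟩
  -- part (b)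
  intro y hy
  -- positivity of frob of the inverse
  have hdetinv : ((cmat (D 0))⁻¹).det ≠ 0 := by
    rw [Matrix.det_nonsing_inv]
    simpa [hdet_cmat] using inv_ne_zero hdet0
  have hinv_ne : (cmat (D 0))⁻¹ ≠ 0 := by
    intro h
    rw [h, Matrix.det_zero] at hdetinv
    exact hdetinv rfl
  set K : ℝ := 2 * y * frob ((cmat (D 0))⁻¹) with hKdef
  have hKpos : 0 < K := by
    have := frob_pos hinv_ne
    positivity
  set F : ℝ → ℝ := fun L => K * (truncNorm L ψ * truncNorm L φ) with hF
  have hF1 : F 1 = 0 := by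
    have : truncNorm (1:ℝ) ψ = 0 := by
      rw [truncNorm]
      norm_num [hψ1, frob_zero]
    simp [hF, this]
  -- find L₀ with F L₀ ≥ 1
  obtain ⟨L₀, hL₀⟩ : ∃ L₀ : ℝ, 1 ≤ L₀ ∧ 1/K ≤ truncNorm L₀ φ * truncNorm L₀ ψ := by
    have h := (parta.eventually_ge_atTop (1/K)).and (eventually_ge_atTop (1:ℝ))
    obtain ⟨L₀, h1, h2⟩ := h.exists
    exact ⟨L₀, h2, h1⟩
  obtain ⟨N, hNL₀⟩ := exists_nat_ge L₀
  have hN1 : (1:ℝ) ≤ (N:ℝ) := le_trans hL₀.1 hNL₀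
  have hFN : 1 ≤ F N := by
    have hm : truncNorm L₀ φ * truncNorm L₀ ψ ≤ truncNorm (N:ℝ) φ * truncNorm (N:ℝ) ψ :=
      mul_le_mul (tmono φ (by linarith [hL₀.1]) hNL₀) (tmono ψ (by linarith [hL₀.1]) hNL₀)
        (tnonneg ψ _) (tnonneg φ _)
    have : 1/K ≤ truncNorm (N:ℝ) φ * truncNorm (N:ℝ) ψ := le_trans hL₀.2 hm
    rw [hF]
    rw [div_le_iff₀ hKpos] at this
    calc (1:ℝ) ≤ truncNorm (N:ℝ) φ * truncNorm (N:ℝ) ψ * K := this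
    _ = K * (truncNorm (N:ℝ) ψ * truncNorm (N:ℝ) φ) := by ring
  -- continuity of F on [1, N]
  have hsub : Set.Icc (1:ℝ) (N:ℝ) ⊆ Set.Icc 0 (N:ℝ) :=
    Set.Icc_subset_Icc_left (by norm_num)
  have hcontψ : ContinuousOn (fun L => truncNorm L ψ) (Set.Icc (1:ℝ) (N:ℝ)) := by
    have : (fun L => truncNorm L ψ)
        = fun L => Real.sqrt (gfun (fun n => frob (ψ n) ^ 2) L) := rfl
    rw [this]
    exact (Real.continuous_sqrt.comp_continuousOn ((gfun_contOn _ N).mono hsub))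
  have hcontφ : ContinuousOn (fun L => truncNorm L φ) (Set.Icc (1:ℝ) (N:ℝ)) := by
    have : (fun L => truncNorm L φ)
        = fun L => Real.sqrt (gfun (fun n => frob (φ n) ^ 2) L) := rfl
    rw [this]
    exact (Real.continuous_sqrt.comp_continuousOn ((gfun_contOn _ N).mono hsub))
  have hcontF : ContinuousOn F (Set.Icc (1:ℝ) (N:ℝ)) :=
    continuousOn_const.mul (hcontψ.mul hcontφ)
  have hIVT := intermediate_value_Icc hN1 hcontF
  have h1mem : (1:ℝ) ∈ Set.Icc (F 1) (F (N:ℝ)) := by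
    rw [hF1]; exact ⟨by norm_num, hFN⟩
  obtain ⟨L, hLmem, hFL⟩ := hIVT h1mem
  refine ⟨L, hLmem.1, ?_⟩
  rw [hF] at hFL
  rw [hKdef] at hFL
  linear_combination hFL
end
end
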